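/- If p is an extreme point (convex hull vertex) of a finite planar set P with distinct coordinates, then p lies on at least one of the four directional hull chains of P (northwest, northeast, southwest, southeast); conversely, the union of the four directional hull chains contains the set of extreme points of P. -/

import Mathlib

/- Cross product test: `cross a b q > 0` means `q` is strictly above the (directed) line
through `a` and `b` (with `a.1 < b.1`). -/
def cross (a b q : ℝ × ℝ) : ℝ :=
  (b.1 - a.1) * (q.2 - a.2) - (b.2 - a.2) * (q.1 - a.1)

/- A northwest monotone convex chain: strictly increasing x- and y-coordinates, and no
point of the chain lies strictly above the line through any two consecutive chain points. -/
def IsNWChain (l : List (ℝ × ℝ)) : Prop :=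
  l.Chain' (fun a b => a.1 < b.1) ∧
  l.Chain' (fun a b => a.2 < b.2) ∧
  ∀ i, (h : i + 1 < l.length) → ∀ q ∈ l,
    cross (l[i]'(Nat.lt_of_succ_lt h)) (l[i+1]'h) q ≤ 0

/- Domination by the full chain (the chain augmented with the sentinels `(head.x, -∞)` and
`(+∞, tail.y)`): `p` is strictly below the vertical sentinel edge at `head.x`, strictly
below the horizontal sentinel ray at height `tail.y`, or strictly below an ordinary edge
whose x-range contains `p.x`. -/
def Dominates (l : List (ℝ × ℝ)) (p : ℝ × ℝ) : Prop :=
  (p.1 = l.head!.1 ∧ p.2 < l.head!.2) ∨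
  (l.getLast!.1 ≤ p.1 ∧ p.2 < l.getLast!.2) ∨
  ∃ i, i + 1 < l.length ∧ l[i]!.1 ≤ p.1 ∧ p.1 ≤ l[i+1]!.1 ∧ cross l[i]! l[i+1]! p < 0

/- `H` is the northwest hull chain of the finite point set `P`: a nonempty northwest
monotone convex chain of points of `P` dominating every other point of `P`. -/
def IsNWHullChain (P : Finset (ℝ × ℝ)) (H : List (ℝ × ℝ)) : Prop :=
  H ≠ [] ∧ (∀ p ∈ H, p ∈ P) ∧ IsNWChain H ∧ ∀ p ∈ P, p ∉ H → Dominates H p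

/- Rotation of the plane by 90 degrees (clockwise). -/
def rot (p : ℝ × ℝ) : ℝ × ℝ := (p.2, -p.1)

lemma getLast!_mem' {l : List (ℝ × ℝ)} (h : l ≠ []) : l.getLast! ∈ l := by
  cases l with
  | nil => exact absurd rfl h
  | cons a t =>
    rw [List.getLast!_cons_eq_getLastD, ← List.getLast_eq_getLastD]
    exact List.getLast_mem (by simp)

lemma key_nw (P : Finset (ℝ × ℝ))
    (hx : ∀ p ∈ P, ∀ q ∈ P, p ≠ q → p.1 ≠ q.1)
    (H : List (ℝ × ℝ)) (hH : IsNWHullChain P H)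
    (p : ℝ × ℝ) (hp : p ∈ P) (α β : ℝ) (hα : α ≤ 0) (hβ : 0 ≤ β)
    (hf : ∀ q ∈ P, q ≠ p → α * q.1 + β * q.2 < α * p.1 + β * p.2) :
    p ∈ H := by
  by_contra hmem
  obtain ⟨hne, hsub, ⟨hcx, _, _⟩, hdom⟩ := hH
  rcases hdom p hp hmem with h1 | h2 | ⟨i, hi, ha, hb, hc⟩
  · have hh : H.head! ∈ H := List.head!_mem_self hne
    have hne' : p ≠ H.head! := by
      rintro rfl; exact lt_irrefl _ h1.2
    exact hx p hp _ (hsub _ hh) hne' h1.1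
  · have hh : H.getLast! ∈ H := getLast!_mem' hne
    have hqp : H.getLast! ≠ p := by
      rintro rfl; exact lt_irrefl _ h2.2
    have := hf _ (hsub _ hh) hqp
    nlinarith [h2.1, h2.2]
  · have hi' : i < H.length := Nat.lt_of_succ_lt hi
    rw [getElem!_pos H i hi'] at ha hc
    rw [getElem!_pos H (i+1) hi] at hb hc
    set a := H[i] with hadef
    set b := H[i+1] with hbdef
    have haH : a ∈ H := List.getElem_mem hi'
    have hbH : b ∈ H := List.getElem_mem hi
    have hab : a.1 < b.1 := by
      have := List.isChain_iff_getElem.1 hcx i (by omega)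
      simpa [List.get_eq_getElem] using this
    have hap : a ≠ p := by
      rintro rfl
      simp only [cross] at hc; nlinarith
    have hbp : b ≠ p := by
      rintro rfl
      simp only [cross] at hc; nlinarith
    have hfa := hf a (hsub _ haH) hap
    have hfb := hf b (hsub _ hbH) hbp
    simp only [cross] at hc
    have h1 : β * ((b.1 - a.1) * (p.2 - a.2) - (b.2 - a.2) * (p.1 - a.1)) ≤ 0 :=
      mul_nonpos_of_nonneg_of_nonpos hβ hc.le
    rcases lt_or_ge p.1 b.1 with hs | hs
    · have h2 : (b.1 - p.1) * (α * a.1 + β * a.2) < (b.1 - p.1) * (α * p.1 + β * p.2) :=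
        mul_lt_mul_of_pos_left hfa (by linarith)
      have h3 : (p.1 - a.1) * (α * b.1 + β * b.2) ≤ (p.1 - a.1) * (α * p.1 + β * p.2) :=
        mul_le_mul_of_nonneg_left hfb.le (by linarith)
      nlinarith [h1, h2, h3]
    · have ht : 0 < p.1 - a.1 := by linarith
      have h2 : (b.1 - p.1) * (α * a.1 + β * a.2) ≤ (b.1 - p.1) * (α * p.1 + β * p.2) :=
        mul_le_mul_of_nonneg_left hfa.le (by linarith)
      have h3 : (p.1 - a.1) * (α * b.1 + β * b.2) < (p.1 - a.1) * (α * p.1 + β * p.2) :=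
        mul_lt_mul_of_pos_left hfb ht
      nlinarith [h1, h2, h3]


/- STATEMENT 14: every extreme point of `P` lies on at least one of the four directional
hull chains (northwest, and the three chains obtained by rotating by 90°, 180°, 270°). -/
theorem extreme_point_on_some_quarter_hull (P : Finset (ℝ × ℝ))
    (hx : ∀ p ∈ P, ∀ q ∈ P, p ≠ q → p.1 ≠ q.1)
    (hy : ∀ p ∈ P, ∀ q ∈ P, p ≠ q → p.2 ≠ q.2)
    (H0 H1 H2 H3 : List (ℝ × ℝ))
    (h0 : IsNWHullChain P H0)
    (h1 : IsNWHullChain (P.image rot) H1)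
    (h2 : IsNWHullChain ((P.image rot).image rot) H2)
    (h3 : IsNWHullChain (((P.image rot).image rot).image rot) H3)
    (p : ℝ × ℝ) (hp : p ∈ P)
    (hext : p ∉ convexHull ℝ ((P.erase p : Finset (ℝ × ℝ)) : Set (ℝ × ℝ))) :
    p ∈ H0 ∨ rot p ∈ H1 ∨ rot (rot p) ∈ H2 ∨ rot (rot (rot p)) ∈ H3 := by
  obtain ⟨f, u, hfu, hup⟩ :=
    geometric_hahn_banach_closed_point (convex_convexHull ℝ _)
      ((P.erase p).finite_toSet.isCompact_convexHull ℝ |>.isClosed) hext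
  set α := f (1, 0) with hαdef
  set β := f (0, 1) with hβdef
  have hfeq : ∀ q : ℝ × ℝ, f q = α * q.1 + β * q.2 := by
    intro q
    have hq : q = q.1 • ((1:ℝ), (0:ℝ)) + q.2 • ((0:ℝ), (1:ℝ)) := by
      ext <;> simp
    rw [hq, map_add, map_smul, map_smul]
    simp [hαdef, hβdef, mul_comm]
  have hf : ∀ q ∈ P, q ≠ p → α * q.1 + β * q.2 < α * p.1 + β * p.2 := by
    intro q hq hqp
    have hq' : q ∈ convexHull ℝ ((P.erase p : Finset (ℝ × ℝ)) : Set (ℝ × ℝ)) :=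
      subset_convexHull ℝ _ (by simp [Finset.mem_erase, hqp, hq])
    have := (hfu q hq').trans hup
    rw [hfeq q, hfeq p] at this
    exact this
  rcases le_total α 0 with hα | hα <;> rcases le_total β 0 with hβ | hβ
  · -- α ≤ 0, β ≤ 0 : frame 1, functional (β, -α)
    refine Or.inr (Or.inl ?_)
    refine key_nw _ ?_ H1 h1 (rot p) (Finset.mem_image_of_mem rot hp) β (-α) hβ (by linarith) ?_
    · simp only [Finset.mem_image]
      rintro _ ⟨a, ha, rfl⟩ _ ⟨b, hb, rfl⟩ hne
      have hab : a ≠ b := fun h => hne (by rw [h])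
      simpa [rot] using hy a ha b hb hab
    · simp only [Finset.mem_image]
      rintro _ ⟨q, hq, rfl⟩ hne
      have hqp : q ≠ p := fun h => hne (by rw [h])
      have := hf q hq hqp
      simp only [rot]
      ring_nf
      nlinarith [this]
  · -- α ≤ 0, 0 ≤ β : frame 0
    exact Or.inl (key_nw P hx H0 h0 p hp α β hα hβ hf)
  · -- 0 ≤ α, β ≤ 0 : frame 2, functional (-α, -β)
    refine Or.inr (Or.inr (Or.inl ?_))
    refine key_nw _ ?_ H2 h2 (rot (rot p))
      (Finset.mem_image_of_mem rot (Finset.mem_image_of_mem rot hp)) (-α) (-β)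
      (by linarith) (by linarith) ?_
    · simp only [Finset.mem_image]
      rintro _ ⟨_, ⟨a, ha, rfl⟩, rfl⟩ _ ⟨_, ⟨b, hb, rfl⟩, rfl⟩ hne
      have hab : a ≠ b := fun h => hne (by rw [h])
      simpa [rot] using hx a ha b hb hab
    · simp only [Finset.mem_image]
      rintro _ ⟨_, ⟨q, hq, rfl⟩, rfl⟩ hne
      have hqp : q ≠ p := fun h => hne (by rw [h])
      have := hf q hq hqp
      simp only [rot]
      ring_nf
      nlinarith [this]
  · -- 0 ≤ α, 0 ≤ β : frame 3, functional (-β, α)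
    refine Or.inr (Or.inr (Or.inr ?_))
    refine key_nw _ ?_ H3 h3 (rot (rot (rot p)))
      (Finset.mem_image_of_mem rot (Finset.mem_image_of_mem rot
        (Finset.mem_image_of_mem rot hp))) (-β) α (by linarith) hα ?_
    · simp only [Finset.mem_image]
      rintro _ ⟨_, ⟨_, ⟨a, ha, rfl⟩, rfl⟩, rfl⟩ _ ⟨_, ⟨_, ⟨b, hb, rfl⟩, rfl⟩, rfl⟩ hne
      have hab : a ≠ b := fun h => hne (by rw [h])
      simpa [rot] using hy a ha b hb hab
    · simp only [Finset.mem_image]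
      rintro _ ⟨_, ⟨_, ⟨q, hq, rfl⟩, rfl⟩, rfl⟩ hne
      have hqp : q ≠ p := fun h => hne (by rw [h])
      have := hf q hq hqp
      simp only [rot]
      ring_nf
      nlinarith [this]
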